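/- Rearrangement of a solution solves the one-dimensional problem (Theorem 3.3, forward direction): let u be a solution of problem P(Ω,u0) on [0,T] such that ∂_t u is bounded on [0,T]×Ω, u0 has no flat regions, u(t,·) has no flat regions for every t ∈ [0,T], and the level-set invariance holds: u0(x1) = u0(x2) implies u(t,x1) = u(t,x2) for all t and, moreover, u0(x1) > u0(x2) implies u(t,x1) ≥ u(t,x2). Let u_*(t,·) denote the decreasing rearrangement of u(t,·). Then u_*(0,·) = u_{0*} and, for every t ∈ [0,T] and almost every s ∈ (0,|Ω|), the map t ↦ u_*(t,s) is differentiable with ∂_t u_*(t,s) = ∫_0^{|Ω|} K_h(u_*(t,σ) − u_*(t,s))·(u_*(t,σ) − u_*(t,s)) dσ + λ(u_{0*}(s) − u_*(t,s)). -/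

import Mathlib

open MeasureTheory Set

/-- The distribution function `m_w(q) = |{x ∈ Ω : w(x) > q}|`. -/
noncomputable def distFun {d : ℕ} (Ω : Set (Fin d → ℝ)) (w : (Fin d → ℝ) → ℝ)
    (q : ℝ) : ℝ :=
  (volume {x ∈ Ω | q < w x}).toReal

/-- The decreasing rearrangement `w_*(s) = inf{q ∈ ℝ : m_w(q) ≤ s}`. -/
noncomputable def decRearr {d : ℕ} (Ω : Set (Fin d → ℝ)) (w : (Fin d → ℝ) → ℝ)
    (s : ℝ) : ℝ :=
  sInf {q : ℝ | distFun Ω w q ≤ s}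

namespace Stmt13

variable {d : ℕ} {Ω : Set (Fin d → ℝ)} {w w₁ w₂ : (Fin d → ℝ) → ℝ} {q s Mw : ℝ}

lemma set_eq (Ω : Set (Fin d → ℝ)) (w : (Fin d → ℝ) → ℝ) (q : ℝ) :
    {x ∈ Ω | q < w x} = Ω ∩ w ⁻¹' (Ioi q) := rfl

lemma msetA (hΩm : MeasurableSet Ω) (hw : Measurable w) (q : ℝ) :
    MeasurableSet {x ∈ Ω | q < w x} := by
  rw [set_eq]; exact hΩm.inter (hw measurableSet_Ioi)

lemma volA_ne_top (hfin : volume Ω ≠ ⊤) : volume {x ∈ Ω | q < w x} ≠ ⊤ :=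
  ne_top_of_le_ne_top hfin (measure_mono (sep_subset _ _))

lemma distFun_anti (hfin : volume Ω ≠ ⊤) : Antitone (distFun Ω w) := by
  intro q q' hqq'
  exact ENNReal.toReal_mono (volA_ne_top hfin)
    (measure_mono (fun x hx => ⟨hx.1, lt_of_le_of_lt hqq' hx.2⟩))

lemma distFun_nonneg : 0 ≤ distFun Ω w q := ENNReal.toReal_nonneg

lemma distFun_le_vol (hfin : volume Ω ≠ ⊤) : distFun Ω w q ≤ (volume Ω).toReal :=
  ENNReal.toReal_mono hfin (measure_mono (sep_subset _ _))

lemma distFun_eq_zero (hwb : ∀ x ∈ Ω, |w x| ≤ Mw) (hq : Mw ≤ q) : distFun Ω w q = 0 := by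
  have : {x ∈ Ω | q < w x} = ∅ := by
    ext x
    simp only [mem_sep_iff, mem_empty_iff_false, iff_false, not_and]
    intro hx hlt
    exact absurd hlt (not_lt.2 (le_trans (le_trans (le_abs_self _) (hwb x hx)) hq))
  rw [distFun, this, measure_empty]; rfl

lemma distFun_eq_vol (hwb : ∀ x ∈ Ω, |w x| ≤ Mw) (hq : q < -Mw) :
    distFun Ω w q = (volume Ω).toReal := by
  have : {x ∈ Ω | q < w x} = Ω := by
    ext x
    simp only [mem_sep_iff, and_iff_left_iff_imp]
    intro hx
    have := (abs_le.1 (hwb x hx)).1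
    linarith
  rw [distFun, this]

lemma distFun_tendsto_right (hfin : volume Ω ≠ ⊤) (q : ℝ) :
    Filter.Tendsto (fun n : ℕ => distFun Ω w (q + 1/(n+1))) Filter.atTop
      (nhds (distFun Ω w q)) := by
  have hmono : Monotone (fun n : ℕ => {x ∈ Ω | q + 1/((n:ℝ)+1) < w x}) := by
    intro n n' hnn' x hx
    refine ⟨hx.1, lt_of_le_of_lt ?_ hx.2⟩
    have h1 : (1:ℝ)/((n':ℝ)+1) ≤ 1/((n:ℝ)+1) := by
      apply one_div_le_one_div_of_le (by positivity)
      linarith [(Nat.cast_le (α := ℝ)).2 hnn']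
    linarith
  have hU : ⋃ n : ℕ, {x ∈ Ω | q + 1/((n:ℝ)+1) < w x} = {x ∈ Ω | q < w x} := by
    ext x
    simp only [mem_iUnion, mem_sep_iff]
    constructor
    · rintro ⟨n, hx, hlt⟩
      exact ⟨hx, lt_trans (lt_add_of_pos_right q (by positivity)) hlt⟩
    · rintro ⟨hx, hlt⟩
      obtain ⟨n, hn⟩ := exists_nat_one_div_lt (sub_pos.2 hlt)
      exact ⟨n, hx, by push_cast at hn ⊢; linarith⟩
  have := tendsto_measure_iUnion_atTop (μ := volume) hmono
  rw [hU] at this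
  exact (ENNReal.tendsto_toReal (volA_ne_top hfin)).comp this


/-- The set defining the decreasing rearrangement. -/
def Sset (Ω : Set (Fin d → ℝ)) (w : (Fin d → ℝ) → ℝ) (s : ℝ) : Set ℝ :=
  {q : ℝ | distFun Ω w q ≤ s}

lemma decRearr_eq : decRearr Ω w s = sInf (Sset Ω w s) := rfl

lemma Sset_nonempty (hwb : ∀ x ∈ Ω, |w x| ≤ Mw) (hs0 : 0 ≤ s) :
    (Sset Ω w s).Nonempty :=
  ⟨Mw, by simp only [Sset, mem_setOf_eq, distFun_eq_zero hwb le_rfl]; exact hs0⟩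

lemma Sset_bddBelow (hwb : ∀ x ∈ Ω, |w x| ≤ Mw)
    (hsm : s < (volume Ω).toReal) : BddBelow (Sset Ω w s) := by
  refine ⟨-Mw, fun q hq => ?_⟩
  by_contra hlt
  push_neg at hlt
  have := distFun_eq_vol hwb hlt
  simp only [Sset, mem_setOf_eq] at hq
  linarith

lemma decRearr_le_of_mem (hwb : ∀ x ∈ Ω, |w x| ≤ Mw)
    (hsm : s < (volume Ω).toReal) (hq : distFun Ω w q ≤ s) :
    decRearr Ω w s ≤ q :=
  csInf_le (Sset_bddBelow hwb hsm) hq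

lemma le_decRearr_of_lb (hwb : ∀ x ∈ Ω, |w x| ≤ Mw) (hs0 : 0 ≤ s)
    {c : ℝ} (hc : ∀ q, distFun Ω w q ≤ s → c ≤ q) : c ≤ decRearr Ω w s :=
  le_csInf (Sset_nonempty hwb hs0) hc

/-- Key characterization: `w_*(s) ≤ q ↔ m_w(q) ≤ s`. -/
lemma decRearr_le_iff (hfin : volume Ω ≠ ⊤)
    (hwb : ∀ x ∈ Ω, |w x| ≤ Mw) (hs0 : 0 ≤ s) (hsm : s < (volume Ω).toReal) {q : ℝ} :
    decRearr Ω w s ≤ q ↔ distFun Ω w q ≤ s := by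
  constructor
  · intro hle
    by_contra hgt
    push_neg at hgt
    have htd := distFun_tendsto_right (Ω := Ω) (w := w) hfin q
    have hev : ∀ᶠ n : ℕ in Filter.atTop, s < distFun Ω w (q + 1/(n+1)) :=
      htd.eventually (eventually_gt_nhds hgt)
    obtain ⟨n, hn⟩ := hev.exists
    have hlt : decRearr Ω w s < q + 1/((n:ℝ)+1) :=
      lt_of_le_of_lt hle (lt_add_of_pos_right q (by positivity))
    obtain ⟨q', hq', hq'lt⟩ := exists_lt_of_csInf_lt
      (Sset_nonempty hwb hs0) hlt
    have : distFun Ω w (q + 1/((n:ℝ)+1)) ≤ distFun Ω w q' :=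
      distFun_anti hfin hq'lt.le
    simp only [Sset, mem_setOf_eq] at hq'
    linarith
  · intro hq
    exact decRearr_le_of_mem hwb hsm hq

lemma lt_decRearr_iff (hfin : volume Ω ≠ ⊤)
    (hwb : ∀ x ∈ Ω, |w x| ≤ Mw) (hs0 : 0 ≤ s) (hsm : s < (volume Ω).toReal) {q : ℝ} :
    q < decRearr Ω w s ↔ s < distFun Ω w q := by
  rw [← not_le, ← not_le, not_iff_not]
  exact decRearr_le_iff hfin hwb hs0 hsm

lemma decRearr_antitoneOn (hwb : ∀ x ∈ Ω, |w x| ≤ Mw) :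
    AntitoneOn (decRearr Ω w) (Ico 0 (volume Ω).toReal) := by
  intro s hs s' hs' hss'
  exact csInf_le_csInf (Sset_bddBelow hwb hs'.2) (Sset_nonempty hwb hs.1)
    (fun q hq => le_trans hq hss')

lemma abs_decRearr_le (hwb : ∀ x ∈ Ω, |w x| ≤ Mw) (hs0 : 0 ≤ s)
    (hsm : s < (volume Ω).toReal) : |decRearr Ω w s| ≤ Mw := by
  rw [abs_le]
  constructor
  · refine le_decRearr_of_lb hwb hs0 (fun q hq => ?_)
    by_contra hlt
    push_neg at hlt
    have := distFun_eq_vol hwb hlt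
    linarith
  · exact decRearr_le_of_mem hwb hsm (by rw [distFun_eq_zero hwb le_rfl]; exact hs0)

lemma decRearr_le_add (hfin : volume Ω ≠ ⊤) {Mw₁ Mw₂ ε : ℝ}
    (hwb₁ : ∀ x ∈ Ω, |w₁ x| ≤ Mw₁) (hwb₂ : ∀ x ∈ Ω, |w₂ x| ≤ Mw₂)
    (hcl : ∀ x ∈ Ω, w₁ x ≤ w₂ x + ε)
    (hs0 : 0 ≤ s) (hsm : s < (volume Ω).toReal) :
    decRearr Ω w₁ s ≤ decRearr Ω w₂ s + ε := by
  have hdist : ∀ q : ℝ, distFun Ω w₁ (q + ε) ≤ distFun Ω w₂ q := by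
    intro q
    refine ENNReal.toReal_mono (volA_ne_top hfin) (measure_mono (fun x hx => ⟨hx.1, ?_⟩))
    have := hcl x hx.1
    have := hx.2
    linarith
  have h1 : ∀ q ∈ Sset Ω w₂ s, decRearr Ω w₁ s - ε ≤ q := by
    intro q hq
    have : decRearr Ω w₁ s ≤ q + ε :=
      decRearr_le_of_mem hwb₁ hsm (le_trans (hdist q) hq)
    linarith
  have h2 := le_csInf (Sset_nonempty hwb₂ hs0) h1
  calc decRearr Ω w₁ s ≤ sInf (Sset Ω w₂ s) + ε := by linarith
  _ = decRearr Ω w₂ s + ε := rfl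

/-- Nonexpansiveness of the rearrangement in sup distance. -/
lemma decRearr_nonexpansive (hfin : volume Ω ≠ ⊤) {Mw₁ Mw₂ ε : ℝ}
    (hwb₁ : ∀ x ∈ Ω, |w₁ x| ≤ Mw₁) (hwb₂ : ∀ x ∈ Ω, |w₂ x| ≤ Mw₂)
    (hcl : ∀ x ∈ Ω, |w₁ x - w₂ x| ≤ ε)
    (hs0 : 0 ≤ s) (hsm : s < (volume Ω).toReal) :
    |decRearr Ω w₁ s - decRearr Ω w₂ s| ≤ ε := by
  rw [abs_sub_le_iff]
  constructor
  · have := decRearr_le_add (w₁ := w₁) (w₂ := w₂) (ε := ε) hfin hwb₁ hwb₂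
      (fun x hx => by have := (abs_le.1 (hcl x hx)).2; linarith) hs0 hsm
    linarith
  · have := decRearr_le_add (w₁ := w₂) (w₂ := w₁) (ε := ε) hfin hwb₂ hwb₁
      (fun x hx => by have := (abs_le.1 (hcl x hx)).1; linarith) hs0 hsm
    linarith


lemma decRearr_distFun_le (hwb : ∀ x ∈ Ω, |w x| ≤ Mw) {x : Fin d → ℝ}
    (hm : distFun Ω w (w x) < (volume Ω).toReal) :
    decRearr Ω w (distFun Ω w (w x)) ≤ w x :=
  decRearr_le_of_mem hwb hm le_rfl

lemma le_decRearr_of_lt (hfin : volume Ω ≠ ⊤) (hwb : ∀ x ∈ Ω, |w x| ≤ Mw)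
    {x : Fin d → ℝ} (hs0 : 0 ≤ s) (hs : s < distFun Ω w (w x)) :
    w x ≤ decRearr Ω w s := by
  refine le_decRearr_of_lb hwb hs0 (fun q hq => ?_)
  by_contra hlt
  push_neg at hlt
  have := distFun_anti (Ω := Ω) (w := w) hfin hlt.le
  linarith

lemma distFun_split (hΩm : MeasurableSet Ω) (hw : Measurable w) (hfin : volume Ω ≠ ⊤)
    {v δ : ℝ} (hδ : 0 < δ) :
    distFun Ω w (v - δ) =
      distFun Ω w v + (volume {x ∈ Ω | v - δ < w x ∧ w x ≤ v}).toReal := by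
  have hset : {x ∈ Ω | v - δ < w x} =
      {x ∈ Ω | v < w x} ∪ {x ∈ Ω | v - δ < w x ∧ w x ≤ v} := by
    ext x
    simp only [mem_sep_iff, mem_union]
    constructor
    · rintro ⟨hx, hlt⟩
      rcases le_or_gt (w x) v with hle | hgt
      · exact Or.inr ⟨hx, hlt, hle⟩
      · exact Or.inl ⟨hx, hgt⟩
    · rintro (⟨hx, hlt⟩ | ⟨hx, hlt, _⟩)
      · exact ⟨hx, by linarith⟩
      · exact ⟨hx, hlt⟩
  have hdisj : Disjoint {x ∈ Ω | v < w x} {x ∈ Ω | v - δ < w x ∧ w x ≤ v} := by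
    rw [Set.disjoint_left]
    rintro x ⟨_, hlt⟩ ⟨_, _, hle⟩
    linarith
  have hmeas : MeasurableSet {x ∈ Ω | v - δ < w x ∧ w x ≤ v} := by
    have : {x ∈ Ω | v - δ < w x ∧ w x ≤ v} = Ω ∩ (w ⁻¹' (Ioc (v - δ) v)) := rfl
    rw [this]
    exact hΩm.inter (hw measurableSet_Ioc)
  rw [distFun, hset, measure_union hdisj hmeas, ENNReal.toReal_add
    (volA_ne_top hfin) (ne_top_of_le_ne_top hfin (measure_mono (fun x hx => hx.1)))]
  rfl

/-- `m_w(w_*(a)) = a` for `a ∈ (0, |Ω|)`, when `w` has no flat regions. -/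
lemma distFun_decRearr_eq (hΩm : MeasurableSet Ω) (hw : Measurable w)
    (hfin : volume Ω ≠ ⊤) (hwb : ∀ x ∈ Ω, |w x| ≤ Mw)
    (hflat : ∀ q : ℝ, volume {x ∈ Ω | w x = q} = 0)
    {a : ℝ} (ha : a ∈ Ioo 0 (volume Ω).toReal) :
    distFun Ω w (decRearr Ω w a) = a := by
  set v := decRearr Ω w a with hv
  have hle : distFun Ω w v ≤ a :=
    (decRearr_le_iff hfin hwb ha.1.le ha.2).1 le_rfl
  rcases eq_or_lt_of_le hle with heq | hlt
  · exact heq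
  exfalso
  -- left limit argument
  set Bn : ℕ → Set (Fin d → ℝ) :=
    fun n => {x ∈ Ω | v - 1/((n:ℝ)+1) < w x ∧ w x ≤ v} with hBn
  have hBmeas : ∀ n, MeasurableSet (Bn n) := by
    intro n
    have : Bn n = Ω ∩ (w ⁻¹' (Ioc (v - 1/((n:ℝ)+1)) v)) := rfl
    rw [this]
    exact hΩm.inter (hw measurableSet_Ioc)
  have hanti : Antitone Bn := by
    intro n n' hnn' x hx
    refine ⟨hx.1, lt_of_le_of_lt ?_ hx.2.1, hx.2.2⟩
    have h1 : (1:ℝ)/((n':ℝ)+1) ≤ 1/((n:ℝ)+1) := by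
      apply one_div_le_one_div_of_le (by positivity)
      linarith [(Nat.cast_le (α := ℝ)).2 hnn']
    linarith
  have hInter : ⋂ n, Bn n = {x ∈ Ω | w x = v} := by
    ext x
    simp only [mem_iInter, hBn, mem_sep_iff]
    constructor
    · intro hxall
      have hx := (hxall 0).1
      have hle' := (hxall 0).2.2
      refine ⟨hx, le_antisymm hle' ?_⟩
      by_contra hwlt
      push_neg at hwlt
      obtain ⟨n, hn⟩ := exists_nat_one_div_lt (sub_pos.2 hwlt)
      have := (hxall n).2.1
      linarith
    · rintro ⟨hx, hweq⟩
      intro n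
      have : (0:ℝ) < 1/((n:ℝ)+1) := by positivity
      exact ⟨hx, by rw [hweq]; linarith, le_of_eq hweq⟩
  have htd : Filter.Tendsto (fun n => volume (Bn n)) Filter.atTop (nhds 0) := by
    have := tendsto_measure_iInter_atTop (μ := volume)
      (fun n => (hBmeas n).nullMeasurableSet) hanti
      ⟨0, ne_top_of_le_ne_top hfin (measure_mono (fun x hx => hx.1))⟩
    rw [hInter, hflat v] at this
    exact this
  have htd' : Filter.Tendsto (fun n => (volume (Bn n)).toReal) Filter.atTop (nhds 0) := by
    have := (ENNReal.tendsto_toReal (by simp)).comp htd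
    simpa [Function.comp_def] using this
  have hev : ∀ᶠ n : ℕ in Filter.atTop, (volume (Bn n)).toReal < a - distFun Ω w v :=
    htd'.eventually (eventually_lt_nhds (by linarith))
  obtain ⟨n, hn⟩ := hev.exists
  have hsplit := distFun_split (Ω := Ω) (w := w) hΩm hw hfin
    (v := v) (δ := 1/((n:ℝ)+1)) (by positivity)
  have hmem : distFun Ω w (v - 1/((n:ℝ)+1)) ≤ a := by
    rw [hsplit]; change _ + (volume (Bn n)).toReal ≤ a; linarith
  have := decRearr_le_of_mem hwb ha.2 hmem
  rw [← hv] at this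
  have : (0:ℝ) < 1/((n:ℝ)+1) := by positivity
  linarith [decRearr_le_of_mem hwb ha.2 hmem]


lemma vol_union_null {S N : Set (Fin d → ℝ)} (hN : volume N = 0) :
    volume (S ∪ N) = volume S := by
  refine le_antisymm (le_trans (measure_union_le _ _) ?_) (measure_mono subset_union_left)
  rw [hN, add_zero]

lemma vol_gt_eq_ofReal (hfin : volume Ω ≠ ⊤) (q : ℝ) :
    volume {x ∈ Ω | q < w x} = ENNReal.ofReal (distFun Ω w q) :=
  (ENNReal.ofReal_toReal (volA_ne_top hfin)).symm

/-- Density of the "rank" map `x ↦ m_w(w x)`. -/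
lemma exists_rank_between (hΩm : MeasurableSet Ω) (hw : Measurable w)
    (hfin : volume Ω ≠ ⊤) (hwb : ∀ x ∈ Ω, |w x| ≤ Mw)
    (hflat : ∀ q : ℝ, volume {x ∈ Ω | w x = q} = 0)
    {s s'' : ℝ} (hs0 : 0 < s) (h1 : s < s'') (h2 : s'' < (volume Ω).toReal) :
    ∃ z ∈ Ω, s < distFun Ω w (w z) ∧ distFun Ω w (w z) ≤ s'' := by
  set v := decRearr Ω w s with hv
  set v'' := decRearr Ω w s'' with hv''
  have hs'0 : 0 < s'' := lt_trans hs0 h1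
  have hsm : s < (volume Ω).toReal := lt_trans h1 h2
  have hMv : distFun Ω w v = s :=
    distFun_decRearr_eq hΩm hw hfin hwb hflat ⟨hs0, hsm⟩
  have hMv'' : distFun Ω w v'' = s'' :=
    distFun_decRearr_eq hΩm hw hfin hwb hflat ⟨hs'0, h2⟩
  -- volumes of closed superlevel sets
  have hvol : ∀ c : ℝ, volume {x ∈ Ω | c ≤ w x} = ENNReal.ofReal (distFun Ω w c) := by
    intro c
    have hsplit : {x ∈ Ω | c ≤ w x} = {x ∈ Ω | c < w x} ∪ {x ∈ Ω | w x = c} := by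
      ext y
      simp only [mem_sep_iff, mem_union]
      constructor
      · rintro ⟨hy, hle⟩
        rcases eq_or_lt_of_le hle with heq | hlt
        · exact Or.inr ⟨hy, heq.symm⟩
        · exact Or.inl ⟨hy, hlt⟩
      · rintro (⟨hy, hlt⟩ | ⟨hy, heq⟩)
        · exact ⟨hy, hlt.le⟩
        · exact ⟨hy, heq.ge⟩
    rw [hsplit, vol_union_null (hflat c), vol_gt_eq_ofReal hfin]
  have hsub : {x ∈ Ω | v ≤ w x} ⊆ {x ∈ Ω | v'' ≤ w x} := by
    intro y hy
    have hvv : v'' ≤ v := by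
      rw [hv, hv'']
      exact decRearr_antitoneOn hwb ⟨hs0.le, hsm⟩ ⟨hs'0.le, h2⟩ h1.le
    exact ⟨hy.1, le_trans hvv hy.2⟩
  have hBmeas : MeasurableSet {x ∈ Ω | v ≤ w x} := by
    have : {x ∈ Ω | v ≤ w x} = Ω ∩ w ⁻¹' (Ici v) := rfl
    rw [this]; exact hΩm.inter (hw measurableSet_Ici)
  have hdiff : volume ({x ∈ Ω | v'' ≤ w x} \ {x ∈ Ω | v ≤ w x}) =
      ENNReal.ofReal s'' - ENNReal.ofReal s := by
    rw [measure_diff hsub hBmeas.nullMeasurableSet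
      (ne_top_of_le_ne_top hfin (measure_mono (fun y hy => hy.1))),
      hvol, hvol, hMv, hMv'']
  have hpos : volume ({x ∈ Ω | v'' ≤ w x} \ {x ∈ Ω | v ≤ w x}) ≠ 0 := by
    rw [hdiff]
    simp only [ne_eq, tsub_eq_zero_iff_le, not_le]
    exact ENNReal.ofReal_lt_ofReal_iff_of_nonneg hs0.le |>.2 h1
  obtain ⟨z, hz⟩ := nonempty_of_measure_ne_zero hpos
  obtain ⟨⟨hzΩ, hzv''⟩, hznot⟩ := hz
  have hzlt : w z < v := by
    by_contra hge
    exact hznot ⟨hzΩ, not_lt.1 hge⟩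
  refine ⟨z, hzΩ, ?_, ?_⟩
  · rw [← lt_decRearr_iff hfin hwb hs0.le hsm]
    exact hzlt
  · rw [← decRearr_le_iff hfin hwb hs'0.le h2]
    exact hzv''

/-- Level-set invariance: the rank of `x` under `g` equals the rank under `f`. -/
lemma distFun_level {f g : (Fin d → ℝ) → ℝ} (hfin : volume Ω ≠ ⊤)
    (hle : ∀ x ∈ Ω, ∀ y ∈ Ω, f y < f x → g y ≤ g x)
    (heq : ∀ x ∈ Ω, ∀ y ∈ Ω, f x = f y → g x = g y)
    (hgflat : ∀ q : ℝ, volume {x ∈ Ω | g x = q} = 0)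
    {x : Fin d → ℝ} (hx : x ∈ Ω) : distFun Ω g (g x) = distFun Ω f (f x) := by
  have hAB : {y ∈ Ω | g x < g y} ⊆ {y ∈ Ω | f x < f y} := by
    rintro y ⟨hy, hgy⟩
    refine ⟨hy, ?_⟩
    rcases lt_trichotomy (f y) (f x) with hlt | heq' | hgt
    · exact absurd (hle x hx y hy hlt) (not_le.2 hgy)
    · exact absurd (heq x hx y hy heq'.symm) (ne_of_lt hgy)
    · exact hgt
  have hBA : {y ∈ Ω | f x < f y} ⊆ {y ∈ Ω | g x < g y} ∪ {y ∈ Ω | g y = g x} := by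
    rintro y ⟨hy, hfy⟩
    have : g x ≤ g y := hle y hy x hx hfy
    rcases eq_or_lt_of_le this with heq' | hlt
    · exact Or.inr ⟨hy, heq'.symm⟩
    · exact Or.inl ⟨hy, hlt⟩
  have h1 : volume {y ∈ Ω | g x < g y} ≤ volume {y ∈ Ω | f x < f y} := measure_mono hAB
  have h2 : volume {y ∈ Ω | f x < f y} ≤ volume {y ∈ Ω | g x < g y} :=
    le_trans (measure_mono hBA) (le_of_eq (vol_union_null (hgflat (g x))))
  rw [distFun, distFun, le_antisymm h1 h2]


/-- Equimeasurability: integrating a continuous function against the rearrangement. -/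
lemma push_integral (hΩm : MeasurableSet Ω) (hw : Measurable w)
    (hfin : volume Ω ≠ ⊤) (hwb : ∀ x ∈ Ω, |w x| ≤ Mw)
    {F : ℝ → ℝ} (hF : Continuous F) :
    ∫ σ in Ioo (0:ℝ) (volume Ω).toReal, F (decRearr Ω w σ) = ∫ y in Ω, F (w y) := by
  set m := (volume Ω).toReal with hm
  rcases eq_or_lt_of_le (ENNReal.toReal_nonneg : 0 ≤ m) with hm0 | hmpos
  · -- trivial case : |Ω| = 0
    have hΩ0 : volume Ω = 0 := by
      rw [← ENNReal.ofReal_toReal hfin, ← hm0]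
      simp
    have hmz : m = 0 := by rw [hm]; exact hm0.symm
    have hIoo : Ioo (0:ℝ) m = ∅ := by rw [hmz]; exact Ioo_self 0
    rw [hIoo]
    simp [Measure.restrict_eq_zero.2 hΩ0]
  -- main case
  set g₂ : ℝ → ℝ := fun σ => if σ ∈ Ioo (0:ℝ) m then decRearr Ω w σ else Mw + 1 with hg₂
  have hpre : ∀ a : ℝ, g₂ ⁻¹' (Iic a) =
      (Ioo (0:ℝ) m ∩ Ici (distFun Ω w a)) ∪ ((Ioo (0:ℝ) m)ᶜ ∩ {σ | Mw + 1 ≤ a}) := by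
    intro a
    ext σ
    simp only [mem_preimage, mem_Iic, hg₂, mem_union, mem_inter_iff, mem_compl_iff,
      mem_setOf_eq, mem_Ici]
    by_cases hσ : σ ∈ Ioo (0:ℝ) m
    · rw [if_pos hσ]
      have := decRearr_le_iff (Ω := Ω) (w := w) (s := σ) hfin hwb hσ.1.le hσ.2 (q := a)
      constructor
      · intro hle
        exact Or.inl ⟨hσ, this.1 hle⟩
      · rintro (⟨_, hge⟩ | ⟨hc, _⟩)
        · exact this.2 hge
        · exact absurd hσ hc
    · rw [if_neg hσ]
      constructor
      · intro hle
        exact Or.inr ⟨hσ, hle⟩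
      · rintro (⟨hc, _⟩ | ⟨_, hle⟩)
        · exact absurd hc hσ
        · exact hle
  have hg₂meas : Measurable g₂ := by
    apply measurable_of_Iic
    intro a
    rw [hpre a]
    refine MeasurableSet.union (measurableSet_Ioo.inter measurableSet_Ici) ?_
    exact measurableSet_Ioo.compl.inter (MeasurableSet.const _)
  haveI hfin₁ : IsFiniteMeasure (volume.restrict (Ioo (0:ℝ) m)) := by
    constructor
    rw [Measure.restrict_apply_univ, Real.volume_Ioo]
    exact ENNReal.ofReal_lt_top
  haveI hfin₂ : IsFiniteMeasure (volume.restrict Ω) := by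
    constructor
    rw [Measure.restrict_apply_univ]
    exact lt_top_iff_ne_top.2 hfin
  have hmap : Measure.map g₂ (volume.restrict (Ioo (0:ℝ) m)) =
      Measure.map w (volume.restrict Ω) := by
    refine Measure.ext_of_Iic _ _ (fun a => ?_)
    rw [Measure.map_apply hg₂meas measurableSet_Iic,
      Measure.map_apply hw measurableSet_Iic,
      Measure.restrict_apply (hg₂meas measurableSet_Iic),
      Measure.restrict_apply (hw measurableSet_Iic)]
    have hL : g₂ ⁻¹' (Iic a) ∩ Ioo (0:ℝ) m = Ioo (0:ℝ) m ∩ Ici (distFun Ω w a) := by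
      rw [hpre a]
      ext σ
      simp only [mem_inter_iff, mem_union, mem_compl_iff, mem_setOf_eq]
      constructor
      · rintro ⟨hu, hσ⟩
        rcases hu with ⟨_, hge⟩ | ⟨hc, _⟩
        · exact ⟨hσ, hge⟩
        · exact absurd hσ hc
      · rintro ⟨hσ, hge⟩
        exact ⟨Or.inl ⟨hσ, hge⟩, hσ⟩
    rw [hL]
    have hc0 : 0 ≤ distFun Ω w a := distFun_nonneg
    have hcm : distFun Ω w a ≤ m := distFun_le_vol hfin
    have hLvol : volume (Ioo (0:ℝ) m ∩ Ici (distFun Ω w a)) =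
        ENNReal.ofReal (m - distFun Ω w a) := by
      rcases eq_or_lt_of_le hc0 with hc0' | hc0'
      · have : Ioo (0:ℝ) m ∩ Ici (distFun Ω w a) = Ioo 0 m := by
          rw [← hc0']
          ext σ
          simp only [mem_inter_iff, mem_Ici, and_iff_left_iff_imp]
          exact fun hσ => hσ.1.le
        rw [this, Real.volume_Ioo, ← hc0', sub_zero]
      · have : Ioo (0:ℝ) m ∩ Ici (distFun Ω w a) = Ico (distFun Ω w a) m := by
          ext σ
          simp only [mem_inter_iff, mem_Ioo, mem_Ici, mem_Ico]
          constructor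
          · rintro ⟨⟨_, h2⟩, h3⟩
            exact ⟨h3, h2⟩
          · rintro ⟨h1, h2⟩
            exact ⟨⟨lt_of_lt_of_le hc0' h1, h2⟩, h1⟩
        rw [this, Real.volume_Ico]
    rw [hLvol]
    -- right side
    have hR : w ⁻¹' (Iic a) ∩ Ω = Ω \ {x ∈ Ω | a < w x} := by
      ext y
      simp only [mem_inter_iff, mem_preimage, mem_Iic, mem_diff, mem_sep_iff, not_and, not_lt]
      constructor
      · rintro ⟨hle, hy⟩
        exact ⟨hy, fun _ => hle⟩
      · rintro ⟨hy, himp⟩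
        exact ⟨himp hy, hy⟩
    rw [hR, measure_diff (fun y hy => hy.1) (msetA hΩm hw a).nullMeasurableSet
      (volA_ne_top hfin), vol_gt_eq_ofReal hfin]
    rw [ENNReal.ofReal_sub _ hc0]
    congr 1
    exact ENNReal.ofReal_toReal hfin
  -- now the integrals
  have h1 : ∫ σ in Ioo (0:ℝ) m, F (decRearr Ω w σ) = ∫ σ in Ioo (0:ℝ) m, F (g₂ σ) := by
    refine setIntegral_congr_fun measurableSet_Ioo (fun σ hσ => ?_)
    simp only [hg₂, if_pos hσ]
  have h2 : ∫ σ in Ioo (0:ℝ) m, F (g₂ σ) =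
      ∫ v, F v ∂(Measure.map g₂ (volume.restrict (Ioo (0:ℝ) m))) :=
    (integral_map hg₂meas.aemeasurable hF.aestronglyMeasurable).symm
  have h3 : ∫ v, F v ∂(Measure.map w (volume.restrict Ω)) = ∫ y in Ω, F (w y) :=
    integral_map hw.aemeasurable hF.aestronglyMeasurable
  rw [h1, h2, hmap, h3]


/-- The set of discontinuity points of the rearrangement in `(0,|Ω|)` is countable. -/
lemma countable_discont (hwb : ∀ x ∈ Ω, |w x| ≤ Mw) :
    Set.Countable {s ∈ Ioo (0:ℝ) (volume Ω).toReal | ¬ContinuousAt (decRearr Ω w) s} := by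
  set m := (volume Ω).toReal with hm
  set I := {pq : ℚ × ℚ // 0 < ((pq.1 : ℝ)) ∧ ((pq.1 : ℝ)) ≤ pq.2 ∧ ((pq.2 : ℝ)) < m} with hI
  set f : I → ℝ → ℝ :=
    fun i σ => decRearr Ω w (min (max σ ((i.1.1 : ℝ))) ((i.1.2 : ℝ))) with hf
  have hfanti : ∀ i : I, Antitone (f i) := by
    intro i σ σ' hσσ'
    have h1 : (i.1.1 : ℝ) ≤ min (max σ ((i.1.1 : ℝ))) ((i.1.2 : ℝ)) :=
      le_min (le_max_right _ _) i.2.2.1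
    have h1' : (i.1.1 : ℝ) ≤ min (max σ' ((i.1.1 : ℝ))) ((i.1.2 : ℝ)) :=
      le_min (le_max_right _ _) i.2.2.1
    have h2 : min (max σ ((i.1.1 : ℝ))) ((i.1.2 : ℝ)) ≤ (i.1.2 : ℝ) := min_le_right _ _
    have h2' : min (max σ' ((i.1.1 : ℝ))) ((i.1.2 : ℝ)) ≤ (i.1.2 : ℝ) := min_le_right _ _
    have hmono : min (max σ ((i.1.1 : ℝ))) ((i.1.2 : ℝ)) ≤
        min (max σ' ((i.1.1 : ℝ))) ((i.1.2 : ℝ)) :=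
      min_le_min (max_le_max hσσ' le_rfl) le_rfl
    exact decRearr_antitoneOn hwb
      ⟨le_trans i.2.1.le h1, lt_of_le_of_lt h2 i.2.2.2⟩
      ⟨le_trans i.2.1.le h1', lt_of_le_of_lt h2' i.2.2.2⟩ hmono
  have hsub : {s ∈ Ioo (0:ℝ) m | ¬ContinuousAt (decRearr Ω w) s} ⊆
      ⋃ i : I, {s | ¬ContinuousAt (f i) s} := by
    rintro s ⟨hs, hdisc⟩
    obtain ⟨p, hp1, hp2⟩ := exists_rat_btwn hs.1
    obtain ⟨q, hq1, hq2⟩ := exists_rat_btwn hs.2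
    have hpq : ((p:ℝ)) ≤ ((q:ℝ)) := le_trans hp2.le hq1.le
    refine mem_iUnion.2 ⟨⟨(p, q), hp1, hpq, hq2⟩, ?_⟩
    simp only [mem_setOf_eq]
    intro hcont
    apply hdisc
    refine hcont.congr ?_
    have hnb : Ioo ((p:ℝ)) ((q:ℝ)) ∈ nhds s := Ioo_mem_nhds hp2 hq1
    refine Filter.eventuallyEq_of_mem hnb (fun σ hσ => ?_)
    have : min (max σ ((p:ℝ))) ((q:ℝ)) = σ := by
      rw [max_eq_left hσ.1.le, min_eq_left hσ.2.le]
    simp only [hf, this]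
  refine Set.Countable.mono hsub ?_
  refine Set.countable_iUnion (fun i => ?_)
  exact (hfanti i).countable_not_continuousAt

end Stmt13

set_option maxHeartbeats 2000000 in
open Stmt13 in
/-- Rearrangement of a solution solves the one-dimensional problem (Theorem 3.3,
forward direction): if `u` solves P(Ω,u0), with no flat regions and time-invariant
level set structure, then `u_*(0,·) = u_{0*}` and `u_*` solves P((0,|Ω|),u_{0*}),
for every `t ∈ [0,T]` and almost every `s ∈ (0,|Ω|)`. -/
theorem stmt_13
    (d : ℕ) (hd : 1 ≤ d)
    (Ω : Set (Fin d → ℝ)) (hΩopen : IsOpen Ω) (hΩbdd : Bornology.IsBounded Ω)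
    (K : ℝ → ℝ) (hKnonneg : ∀ ξ, 0 ≤ K ξ) (BK : ℝ) (hKbdd : ∀ ξ, K ξ ≤ BK)
    (LK : NNReal) (hKlip : LipschitzWith LK K)
    (h : ℝ) (hh : 0 < h) (lam : ℝ) (hlam : 0 ≤ lam) (T : ℝ) (hT : 0 < T)
    (u0 : (Fin d → ℝ) → ℝ) (hu0m : Measurable u0) (M0 : ℝ) (hu0b : ∀ x ∈ Ω, |u0 x| ≤ M0)
    (u : ℝ → (Fin d → ℝ) → ℝ)
    -- u is a solution of P(Ω,u0)
    (humeas : ∀ t ∈ Icc (0:ℝ) T, Measurable (u t))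
    (M : ℝ) (hubdd : ∀ t ∈ Icc (0:ℝ) T, ∀ x ∈ Ω, |u t x| ≤ M)
    (hinit : ∀ x ∈ Ω, u 0 x = u0 x)
    (hsol : ∀ t ∈ Icc (0:ℝ) T, ∀ x ∈ Ω,
      HasDerivWithinAt (fun τ => u τ x)
        ((∫ y in Ω, K ((u t y - u t x) / h) * (u t y - u t x)) + lam * (u0 x - u t x))
        (Icc 0 T) t)
    -- ∂_t u is bounded on [0,T]×Ω
    (B : ℝ) (hdtb : ∀ t ∈ Icc (0:ℝ) T, ∀ x ∈ Ω,
      |(∫ y in Ω, K ((u t y - u t x) / h) * (u t y - u t x)) + lam * (u0 x - u t x)| ≤ B)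
    -- no flat regions
    (hu0flat : ∀ q : ℝ, volume {x ∈ Ω | u0 x = q} = 0)
    (huflat : ∀ t ∈ Icc (0:ℝ) T, ∀ q : ℝ, volume {x ∈ Ω | u t x = q} = 0)
    -- level-set invariance
    (hlevel : ∀ t ∈ Icc (0:ℝ) T, ∀ x1 ∈ Ω, ∀ x2 ∈ Ω, u0 x1 = u0 x2 → u t x1 = u t x2)
    (hmono : ∀ t ∈ Icc (0:ℝ) T, ∀ x1 ∈ Ω, ∀ x2 ∈ Ω, u0 x2 < u0 x1 → u t x2 ≤ u t x1) :
    (∀ s ∈ Ioo (0:ℝ) (volume Ω).toReal, decRearr Ω (u 0) s = decRearr Ω u0 s) ∧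
    (∀ t ∈ Icc (0:ℝ) T, ∀ᵐ s ∂(volume.restrict (Ioo (0:ℝ) (volume Ω).toReal)),
      HasDerivWithinAt (fun τ => decRearr Ω (u τ) s)
        ((∫ σ in (0:ℝ)..(volume Ω).toReal,
            K ((decRearr Ω (u t) σ - decRearr Ω (u t) s) / h) *
              (decRearr Ω (u t) σ - decRearr Ω (u t) s))
          + lam * (decRearr Ω u0 s - decRearr Ω (u t) s))
        (Icc 0 T) t) := by
  have hΩm : MeasurableSet Ω := hΩopen.measurableSet
  have hfin : volume Ω ≠ ⊤ := hΩbdd.measure_lt_top.ne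
  have hdist0 : distFun Ω (u 0) = distFun Ω u0 := by
    funext q
    have hset : {x ∈ Ω | q < u 0 x} = {x ∈ Ω | q < u0 x} := by
      ext x
      simp only [mem_sep_iff]
      exact and_congr_right (fun hx => by rw [hinit x hx])
    rw [distFun, distFun, hset]
  have hpart1 : ∀ s : ℝ, decRearr Ω (u 0) s = decRearr Ω u0 s := by
    intro s; unfold decRearr; rw [hdist0]
  refine ⟨fun s _ => hpart1 s, ?_⟩
  intro t ht
  rcases eq_or_lt_of_le (ENNReal.toReal_nonneg : (0:ℝ) ≤ (volume Ω).toReal) with hm0 | hmpos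
  · -- degenerate case |Ω| = 0
    have hIoo : Ioo (0:ℝ) (volume Ω).toReal = ∅ := by rw [← hm0]; exact Ioo_self 0
    rw [hIoo, Measure.restrict_empty]
    simp
  -- main case
  have h0T : (0:ℝ) ∈ Icc (0:ℝ) T := ⟨le_refl 0, hT.le⟩
  have hΩn0 : volume Ω ≠ 0 := by
    intro h0
    rw [h0] at hmpos
    simp at hmpos
  obtain ⟨x₀, hx₀⟩ := nonempty_of_measure_ne_zero hΩn0
  have hM : 0 ≤ M := le_trans (abs_nonneg _) (hubdd t ht x₀ hx₀)
  have hB : 0 ≤ B := le_trans (abs_nonneg _) (hdtb t ht x₀ hx₀)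
  have hBK : 0 ≤ BK := le_trans (hKnonneg 0) (hKbdd 0)
  -- uniform Lipschitz bound in time
  have uLip : ∀ τ ∈ Icc (0:ℝ) T, ∀ σ ∈ Icc (0:ℝ) T, ∀ x ∈ Ω,
      |u τ x - u σ x| ≤ B * |τ - σ| := by
    intro τ hτ σ hσ x hx
    have := (convex_Icc (0:ℝ) T).norm_image_sub_le_of_norm_hasDerivWithin_le
      (f := fun τ' => u τ' x)
      (f' := fun τ' => (∫ y in Ω, K ((u τ' y - u τ' x) / h) * (u τ' y - u τ' x))
        + lam * (u0 x - u τ' x))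
      (fun τ' hτ' => hsol τ' hτ' x hx)
      (fun τ' hτ' => by rw [Real.norm_eq_abs]; exact hdtb τ' hτ' x hx) hσ hτ
    simpa [Real.norm_eq_abs] using this
  -- rank invariance
  have hrank : ∀ τ ∈ Icc (0:ℝ) T, ∀ x ∈ Ω,
      distFun Ω (u τ) (u τ x) = distFun Ω u0 (u0 x) := by
    intro τ hτ x hx
    exact distFun_level hfin
      (fun a ha b hb hba => hmono τ hτ a ha b hb hba) (hlevel τ hτ) (huflat τ hτ) hx
  -- countable bad set
  set 𝒩 : Set ℝ := ⋃ r : {r : ℚ // (r:ℝ) ∈ Icc (0:ℝ) T},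
    {s ∈ Ioo (0:ℝ) (volume Ω).toReal | ¬ContinuousAt (decRearr Ω (u ((r:ℚ):ℝ))) s} with h𝒩
  have hNc : Set.Countable 𝒩 :=
    Set.countable_iUnion (fun r => countable_discont (hubdd _ r.2))
  have hNvol : volume 𝒩 = 0 := hNc.measure_zero _
  have hae1 : ∀ᵐ s ∂(volume.restrict (Ioo (0:ℝ) (volume Ω).toReal)),
      s ∈ Ioo (0:ℝ) (volume Ω).toReal := ae_restrict_mem measurableSet_Ioo
  have hae2 : ∀ᵐ s ∂(volume.restrict (Ioo (0:ℝ) (volume Ω).toReal)), s ∉ 𝒩 :=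
    ae_restrict_of_ae (measure_eq_zero_iff_ae_notMem.1 hNvol)
  filter_upwards [hae1, hae2] with s hsIoo hsN
  -- continuity of the rearrangement at s, for all times
  have hcontAll : ∀ τ ∈ Icc (0:ℝ) T, ContinuousAt (fun s' => decRearr Ω (u τ) s') s := by
    intro τ hτ
    rw [Metric.continuousAt_iff]
    intro ε hε
    set ε' := ε / (4 * (B + 1)) with hε'def
    have hε' : 0 < ε' := by
      rw [hε'def]
      positivity
    -- find a rational time close to τ
    have hlohi : max 0 (τ - ε') < min T (τ + ε') := by
      rcases ht with ⟨ht0, htT⟩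
      rcases hτ with ⟨hτ0, hτT⟩
      apply max_lt
      · exact lt_min hT (by linarith)
      · exact lt_min (by linarith) (by linarith)
    obtain ⟨r, hr1, hr2⟩ := exists_rat_btwn hlohi
    have hrIcc : ((r:ℚ):ℝ) ∈ Icc (0:ℝ) T :=
      ⟨le_of_lt (lt_of_le_of_lt (le_max_left _ _) hr1),
       le_of_lt (lt_of_lt_of_le hr2 (min_le_left _ _))⟩
    have hrτ : |τ - (r:ℝ)| ≤ ε' := by
      rw [abs_sub_le_iff]
      constructor
      · have := lt_of_le_of_lt (le_max_right 0 (τ - ε')) hr1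
        linarith
      · have := lt_of_lt_of_le hr2 (min_le_right T (τ + ε'))
        linarith
    -- continuity at s for the rational time r
    have hcontr : ContinuousAt (decRearr Ω (u ((r:ℚ):ℝ))) s := by
      by_contra hnc
      apply hsN
      rw [h𝒩, mem_iUnion]
      exact ⟨⟨r, hrIcc⟩, hsIoo, hnc⟩
    rw [Metric.continuousAt_iff] at hcontr
    obtain ⟨δ₂, hδ₂, hδ₂p⟩ := hcontr (ε/4) (by positivity)
    set δ := min (min s ((volume Ω).toReal - s)) δ₂ with hδdef
    refine ⟨δ, lt_min (lt_min hsIoo.1 (by linarith [hsIoo.2])) hδ₂, ?_⟩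
    intro s' hs's
    rw [Real.dist_eq] at hs's
    have hs'Ioo : s' ∈ Ioo (0:ℝ) (volume Ω).toReal := by
      have h1 : |s' - s| < min s ((volume Ω).toReal - s) :=
        lt_of_lt_of_le hs's (min_le_left _ _)
      have h2 := abs_lt.1 h1
      constructor
      · have := min_le_left s ((volume Ω).toReal - s)
        linarith [h2.1]
      · have := min_le_right s ((volume Ω).toReal - s)
        linarith [h2.2]
    have hNE1 : |decRearr Ω (u τ) s' - decRearr Ω (u ((r:ℚ):ℝ)) s'| ≤ B * |τ - (r:ℝ)| :=
      decRearr_nonexpansive hfin (hubdd τ hτ) (hubdd _ hrIcc)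
        (fun x hx => uLip τ hτ _ hrIcc x hx) hs'Ioo.1.le hs'Ioo.2
    have hNE2 : |decRearr Ω (u τ) s - decRearr Ω (u ((r:ℚ):ℝ)) s| ≤ B * |τ - (r:ℝ)| :=
      decRearr_nonexpansive hfin (hubdd τ hτ) (hubdd _ hrIcc)
        (fun x hx => uLip τ hτ _ hrIcc x hx) hsIoo.1.le hsIoo.2
    have hmid : |decRearr Ω (u ((r:ℚ):ℝ)) s' - decRearr Ω (u ((r:ℚ):ℝ)) s| < ε/4 := by
      have := hδ₂p (show dist s' s < δ₂ by
        rw [Real.dist_eq]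
        exact lt_of_lt_of_le hs's (min_le_right _ _))
      rwa [Real.dist_eq] at this
    have hBε : B * |τ - (r:ℝ)| ≤ ε/4 := by
      have h1 : B * |τ - (r:ℝ)| ≤ B * ε' := by
        apply mul_le_mul_of_nonneg_left hrτ hB
      have h2 : B * ε' ≤ (B + 1) * ε' := by nlinarith
      have h3 : (B + 1) * ε' = ε/4 := by
        rw [hε'def]
        field_simp
      linarith
    rw [Real.dist_eq]
    have htri : |decRearr Ω (u τ) s' - decRearr Ω (u τ) s| ≤
        |decRearr Ω (u τ) s' - decRearr Ω (u ((r:ℚ):ℝ)) s'| +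
        |decRearr Ω (u ((r:ℚ):ℝ)) s' - decRearr Ω (u ((r:ℚ):ℝ)) s| +
        |decRearr Ω (u ((r:ℚ):ℝ)) s - decRearr Ω (u τ) s| := by
      have := abs_sub_le (decRearr Ω (u τ) s') (decRearr Ω (u ((r:ℚ):ℝ)) s')
        (decRearr Ω (u τ) s)
      have h2 := abs_sub_le (decRearr Ω (u ((r:ℚ):ℝ)) s')
        (decRearr Ω (u ((r:ℚ):ℝ)) s) (decRearr Ω (u τ) s)
      linarith
    have habs : |decRearr Ω (u ((r:ℚ):ℝ)) s - decRearr Ω (u τ) s| ≤ B * |τ - (r:ℝ)| := by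
      rw [abs_sub_comm]
      exact hNE2
    calc |decRearr Ω (u τ) s' - decRearr Ω (u τ) s| ≤ _ := htri
    _ < ε := by linarith
  -- approximating sequence of points
  set s'' : ℕ → ℝ := fun n => s + ((volume Ω).toReal - s) / ((n:ℝ) + 2) with hs''def
  have hs''gt : ∀ n : ℕ, s < s'' n := by
    intro n
    rw [hs''def]
    have : (0:ℝ) < ((volume Ω).toReal - s) / ((n:ℝ) + 2) := by
      apply div_pos (by linarith [hsIoo.2]) (by positivity)
    linarith
  have hs''lt : ∀ n : ℕ, s'' n < (volume Ω).toReal := by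
    intro n
    rw [hs''def]
    have h1 : ((volume Ω).toReal - s) / ((n:ℝ) + 2) < (volume Ω).toReal - s := by
      apply div_lt_self (by linarith [hsIoo.2])
      have : (0:ℝ) ≤ (n:ℝ) := Nat.cast_nonneg n
      linarith
    simp only
    linarith
  have hs''tend : Filter.Tendsto s'' Filter.atTop (nhds s) := by
    rw [hs''def]
    have h1 : Filter.Tendsto (fun n : ℕ => ((volume Ω).toReal - s) / ((n:ℝ) + 2))
        Filter.atTop (nhds 0) := by
      apply Filter.Tendsto.div_atTop tendsto_const_nhds
      apply Filter.tendsto_atTop_add_const_right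
      exact tendsto_natCast_atTop_atTop
    have := Filter.Tendsto.add (tendsto_const_nhds (x := s) (f := Filter.atTop (α := ℕ))) h1
    simpa using this
  have hzex : ∀ n : ℕ, ∃ z ∈ Ω, s < distFun Ω u0 (u0 z) ∧ distFun Ω u0 (u0 z) ≤ s'' n :=
    fun n => exists_rank_between hΩm hu0m hfin hu0b hu0flat hsIoo.1 (hs''gt n) (hs''lt n)
  choose z hzΩ hz1 hz2 using hzex
  -- sandwich bounds
  have hup : ∀ τ ∈ Icc (0:ℝ) T, ∀ n : ℕ, u τ (z n) ≤ decRearr Ω (u τ) s := by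
    intro τ hτ n
    exact le_decRearr_of_lt hfin (hubdd τ hτ) hsIoo.1.le
      (by rw [hrank τ hτ (z n) (hzΩ n)]; exact hz1 n)
  have hlow : ∀ τ ∈ Icc (0:ℝ) T, ∀ n : ℕ, decRearr Ω (u τ) (s'' n) ≤ u τ (z n) := by
    intro τ hτ n
    have hρm : distFun Ω (u τ) (u τ (z n)) < (volume Ω).toReal := by
      rw [hrank τ hτ (z n) (hzΩ n)]
      exact lt_of_le_of_lt (hz2 n) (hs''lt n)
    have h1 := decRearr_distFun_le (hubdd τ hτ) hρm
    have h2 : decRearr Ω (u τ) (s'' n) ≤ decRearr Ω (u τ) (distFun Ω (u τ) (u τ (z n))) := by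
      apply decRearr_antitoneOn (hubdd τ hτ) ⟨distFun_nonneg, hρm⟩
        ⟨by linarith [hsIoo.1, hs''gt n], hs''lt n⟩
      rw [hrank τ hτ (z n) (hzΩ n)]
      exact hz2 n
    linarith
  -- convergence of u τ (z n) to the rearrangement value
  have hconv : ∀ τ ∈ Icc (0:ℝ) T, Filter.Tendsto (fun n => u τ (z n)) Filter.atTop
      (nhds (decRearr Ω (u τ) s)) := by
    intro τ hτ
    have hlowtend : Filter.Tendsto (fun n => decRearr Ω (u τ) (s'' n)) Filter.atTop
        (nhds (decRearr Ω (u τ) s)) := ((hcontAll τ hτ).tendsto).comp hs''tend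
    exact tendsto_of_tendsto_of_tendsto_of_le_of_le hlowtend tendsto_const_nhds
      (fun n => hlow τ hτ n) (fun n => hup τ hτ n)
  -- Lipschitz estimate for the nonlinearity
  set Lψ : ℝ := BK + 2 * M * LK / h with hLψdef
  have hLψ : 0 ≤ Lψ := by
    rw [hLψdef]
    have : (0:ℝ) ≤ (LK:ℝ) := LK.coe_nonneg
    positivity
  have hψ : ∀ c c' : ℝ, |c| ≤ 2*M → |c'| ≤ 2*M →
      |K (c/h) * c - K (c'/h) * c'| ≤ Lψ * |c - c'| := by
    intro c c' hc hc'
    have hsplit : K (c/h) * c - K (c'/h) * c'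
        = K (c/h) * (c - c') + (K (c/h) - K (c'/h)) * c' := by ring
    have e1 : |K (c/h) * (c - c')| ≤ BK * |c - c'| := by
      rw [abs_mul, abs_of_nonneg (hKnonneg _)]
      exact mul_le_mul_of_nonneg_right (hKbdd _) (abs_nonneg _)
    have eK : |K (c/h) - K (c'/h)| ≤ (LK:ℝ) / h * |c - c'| := by
      have := hKlip.dist_le_mul (c/h) (c'/h)
      rw [Real.dist_eq, Real.dist_eq] at this
      have harg : |c/h - c'/h| = |c - c'| / h := by
        rw [div_sub_div_same, abs_div, abs_of_pos hh]
      rw [harg] at this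
      calc |K (c/h) - K (c'/h)| ≤ (LK:ℝ) * (|c - c'| / h) := this
      _ = (LK:ℝ) / h * |c - c'| := by ring
    have e2 : |(K (c/h) - K (c'/h)) * c'| ≤ ((LK:ℝ) / h * |c - c'|) * (2*M) := by
      rw [abs_mul]
      apply mul_le_mul eK hc' (abs_nonneg _)
      positivity
    calc |K (c/h) * c - K (c'/h) * c'|
        ≤ |K (c/h) * (c - c')| + |(K (c/h) - K (c'/h)) * c'| := by
          rw [hsplit]; exact abs_add_le _ _
    _ ≤ BK * |c - c'| + ((LK:ℝ) / h * |c - c'|) * (2*M) := by linarith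
    _ = Lψ * |c - c'| := by rw [hLψdef]; ring
  -- integrability of the nonlinearity
  haveI hfinres : IsFiniteMeasure (volume.restrict Ω) := by
    constructor
    rw [Measure.restrict_apply_univ]
    exact lt_top_iff_ne_top.2 hfin
  have hInt : ∀ τ ∈ Icc (0:ℝ) T, ∀ c : ℝ,
      Integrable (fun y => K ((u τ y - c)/h) * (u τ y - c)) (volume.restrict Ω) := by
    intro τ hτ c
    have hmeas : Measurable (fun y => K ((u τ y - c)/h) * (u τ y - c)) := by
      have h1 : Measurable (fun y => u τ y - c) := (humeas τ hτ).sub_const c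
      exact ((hKlip.continuous.measurable).comp (h1.div_const h)).mul h1
    apply Integrable.mono' (integrable_const (BK * (M + |c|)))
      hmeas.aestronglyMeasurable
    rw [ae_restrict_iff' hΩm]
    refine Filter.Eventually.of_forall (fun y hy => ?_)
    rw [Real.norm_eq_abs, abs_mul, abs_of_nonneg (hKnonneg _)]
    have h1 : |u τ y - c| ≤ M + |c| := by
      have := hubdd τ hτ y hy
      have := abs_sub_abs_le_abs_sub (u τ y) c
      have h3 := abs_sub (u τ y) c
      calc |u τ y - c| ≤ |u τ y| + |c| := abs_sub _ _
      _ ≤ M + |c| := by linarith [hubdd τ hτ y hy]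
    calc K ((u τ y - c)/h) * |u τ y - c| ≤ BK * |u τ y - c| :=
      mul_le_mul_of_nonneg_right (hKbdd _) (abs_nonneg _)
    _ ≤ BK * (M + |c|) := mul_le_mul_of_nonneg_left h1 hBK
  -- the time-dependent derivative values
  set Dn : ℕ → ℝ → ℝ := fun n τ =>
    (∫ y in Ω, K ((u τ y - u τ (z n)) / h) * (u τ y - u τ (z n)))
      + lam * (u0 (z n) - u τ (z n)) with hDndef
  have hDderiv : ∀ n : ℕ, ∀ τ ∈ Icc (0:ℝ) T,
      HasDerivWithinAt (fun τ' => u τ' (z n)) (Dn n τ) (Icc 0 T) τ :=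
    fun n τ hτ => hsol τ hτ (z n) (hzΩ n)
  set C₃ : ℝ := (volume Ω).toReal * (Lψ * (2*B)) + lam * B with hC₃def
  have hC₃ : 0 ≤ C₃ := by
    rw [hC₃def]
    positivity
  have hDlip : ∀ n : ℕ, ∀ τ ∈ Icc (0:ℝ) T, ∀ σ ∈ Icc (0:ℝ) T,
      |Dn n τ - Dn n σ| ≤ C₃ * |τ - σ| := by
    intro n τ hτ σ hσ
    have hIτ := hInt τ hτ (u τ (z n))
    have hIσ := hInt σ hσ (u σ (z n))
    have hIdiff : (∫ y in Ω, K ((u τ y - u τ (z n)) / h) * (u τ y - u τ (z n)))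
        - (∫ y in Ω, K ((u σ y - u σ (z n)) / h) * (u σ y - u σ (z n)))
        = ∫ y in Ω, (K ((u τ y - u τ (z n)) / h) * (u τ y - u τ (z n))
          - K ((u σ y - u σ (z n)) / h) * (u σ y - u σ (z n))) :=
      (integral_sub hIτ hIσ).symm
    have hbd : ∀ᵐ y ∂(volume.restrict Ω),
        ‖K ((u τ y - u τ (z n)) / h) * (u τ y - u τ (z n))
          - K ((u σ y - u σ (z n)) / h) * (u σ y - u σ (z n))‖ ≤ Lψ * (2*B) * |τ - σ| := by
      rw [ae_restrict_iff' hΩm]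
      refine Filter.Eventually.of_forall (fun y hy => ?_)
      rw [Real.norm_eq_abs]
      have hcb : |u τ y - u τ (z n)| ≤ 2*M := by
        have h1 := hubdd τ hτ y hy
        have h2 := hubdd τ hτ (z n) (hzΩ n)
        have := abs_sub (u τ y) (u τ (z n))
        calc |u τ y - u τ (z n)| ≤ |u τ y| + |u τ (z n)| := abs_sub _ _
        _ ≤ 2*M := by linarith
      have hcb' : |u σ y - u σ (z n)| ≤ 2*M := by
        have h1 := hubdd σ hσ y hy
        have h2 := hubdd σ hσ (z n) (hzΩ n)
        calc |u σ y - u σ (z n)| ≤ |u σ y| + |u σ (z n)| := abs_sub _ _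
        _ ≤ 2*M := by linarith
      have hψ' := hψ _ _ hcb hcb'
      have hdiffb : |(u τ y - u τ (z n)) - (u σ y - u σ (z n))| ≤ 2*B*|τ - σ| := by
        have h1 := uLip τ hτ σ hσ y hy
        have h2 := uLip τ hτ σ hσ (z n) (hzΩ n)
        calc |(u τ y - u τ (z n)) - (u σ y - u σ (z n))|
            = |(u τ y - u σ y) - (u τ (z n) - u σ (z n))| := by ring_nf
        _ ≤ |u τ y - u σ y| + |u τ (z n) - u σ (z n)| := abs_sub _ _
        _ ≤ 2*B*|τ - σ| := by linarith
      calc |K ((u τ y - u τ (z n)) / h) * (u τ y - u τ (z n))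
          - K ((u σ y - u σ (z n)) / h) * (u σ y - u σ (z n))|
          ≤ Lψ * |(u τ y - u τ (z n)) - (u σ y - u σ (z n))| := hψ'
      _ ≤ Lψ * (2*B*|τ - σ|) := mul_le_mul_of_nonneg_left hdiffb hLψ
      _ = Lψ * (2*B) * |τ - σ| := by ring
    have hIbound : |(∫ y in Ω, K ((u τ y - u τ (z n)) / h) * (u τ y - u τ (z n)))
        - (∫ y in Ω, K ((u σ y - u σ (z n)) / h) * (u σ y - u σ (z n)))|
        ≤ (Lψ * (2*B) * |τ - σ|) * (volume Ω).toReal := by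
      rw [hIdiff, ← Real.norm_eq_abs]
      have := norm_integral_le_of_norm_le_const hbd
      rwa [measureReal_restrict_apply_univ] at this
    have hlamb : |lam * (u0 (z n) - u τ (z n)) - lam * (u0 (z n) - u σ (z n))|
        ≤ lam * (B * |τ - σ|) := by
      have h1 : lam * (u0 (z n) - u τ (z n)) - lam * (u0 (z n) - u σ (z n))
          = lam * (u σ (z n) - u τ (z n)) := by ring
      rw [h1, abs_mul, abs_of_nonneg hlam]
      apply mul_le_mul_of_nonneg_left _ hlam
      rw [abs_sub_comm]
      exact uLip τ hτ σ hσ (z n) (hzΩ n)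
    rw [hDndef]
    simp only
    calc |(∫ y in Ω, K ((u τ y - u τ (z n)) / h) * (u τ y - u τ (z n)))
          + lam * (u0 (z n) - u τ (z n))
          - ((∫ y in Ω, K ((u σ y - u σ (z n)) / h) * (u σ y - u σ (z n)))
          + lam * (u0 (z n) - u σ (z n)))|
        ≤ |(∫ y in Ω, K ((u τ y - u τ (z n)) / h) * (u τ y - u τ (z n)))
          - (∫ y in Ω, K ((u σ y - u σ (z n)) / h) * (u σ y - u σ (z n)))|
          + |lam * (u0 (z n) - u τ (z n)) - lam * (u0 (z n) - u σ (z n))| := by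
          have := abs_add_le ((∫ y in Ω, K ((u τ y - u τ (z n)) / h) * (u τ y - u τ (z n)))
            - (∫ y in Ω, K ((u σ y - u σ (z n)) / h) * (u σ y - u σ (z n))))
            (lam * (u0 (z n) - u τ (z n)) - lam * (u0 (z n) - u σ (z n)))
          calc _ = |((∫ y in Ω, K ((u τ y - u τ (z n)) / h) * (u τ y - u τ (z n)))
            - (∫ y in Ω, K ((u σ y - u σ (z n)) / h) * (u σ y - u σ (z n))))
            + (lam * (u0 (z n) - u τ (z n)) - lam * (u0 (z n) - u σ (z n)))| := by congr 1; ring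
          _ ≤ _ := this
    _ ≤ (Lψ * (2*B) * |τ - σ|) * (volume Ω).toReal + lam * (B * |τ - σ|) := by
          linarith
    _ = C₃ * |τ - σ| := by rw [hC₃def]; ring
  -- mean value estimate
  have hMVT : ∀ n : ℕ, ∀ τ ∈ Icc (0:ℝ) T,
      |u τ (z n) - u t (z n) - Dn n t * (τ - t)| ≤ (C₃ * |τ - t|) * |τ - t| := by
    intro n τ hτ
    have hsub : uIcc t τ ⊆ Icc (0:ℝ) T := uIcc_subset_Icc ht hτ
    have hg : ∀ σ ∈ uIcc t τ, HasDerivWithinAt (fun σ' => u σ' (z n) - σ' * Dn n t)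
        (Dn n σ - Dn n t) (uIcc t τ) σ := by
      intro σ hσ
      have h1 := (hDderiv n σ (hsub hσ)).mono hsub
      have h2 := (hasDerivWithinAt_id σ (uIcc t τ)).mul_const (Dn n t)
      rw [one_mul] at h2
      exact h1.sub h2
    have hbound : ∀ σ ∈ uIcc t τ, ‖Dn n σ - Dn n t‖ ≤ C₃ * |τ - t| := by
      intro σ hσ
      have hσt : |σ - t| ≤ |τ - t| := by
        rcases le_total t τ with hc | hc
        · rw [uIcc_of_le hc] at hσ
          rw [abs_of_nonneg (by linarith [hσ.1]), abs_of_nonneg (by linarith)]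
          linarith [hσ.2]
        · rw [uIcc_of_ge hc] at hσ
          rw [abs_of_nonpos (by linarith [hσ.2]), abs_of_nonpos (by linarith)]
          linarith [hσ.1]
      rw [Real.norm_eq_abs]
      calc |Dn n σ - Dn n t| ≤ C₃ * |σ - t| := hDlip n σ (hsub hσ) t ht
      _ ≤ C₃ * |τ - t| := mul_le_mul_of_nonneg_left hσt hC₃
    have := (convex_uIcc t τ).norm_image_sub_le_of_norm_hasDerivWithin_le hg hbound
      left_mem_uIcc right_mem_uIcc
    rw [Real.norm_eq_abs, Real.norm_eq_abs] at this
    have heq : u τ (z n) - u t (z n) - Dn n t * (τ - t)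
        = (u τ (z n) - τ * Dn n t) - (u t (z n) - t * Dn n t) := by ring
    rw [heq]
    exact this
  -- limit of the derivative values
  have hφbd : |decRearr Ω (u t) s| ≤ M := abs_decRearr_le (hubdd t ht) hsIoo.1.le hsIoo.2
  have hDtend : Filter.Tendsto (fun n => Dn n t) Filter.atTop
      (nhds ((∫ y in Ω, K ((u t y - decRearr Ω (u t) s) / h) * (u t y - decRearr Ω (u t) s))
        + lam * (decRearr Ω (u 0) s - decRearr Ω (u t) s))) := by
    have he : Filter.Tendsto (fun n => |u t (z n) - decRearr Ω (u t) s|)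
        Filter.atTop (nhds 0) := by
      have h1 := (hconv t ht).sub (tendsto_const_nhds (x := decRearr Ω (u t) s))
      have := h1.abs
      simpa using this
    have hf : Filter.Tendsto (fun n => |u0 (z n) - decRearr Ω (u 0) s|)
        Filter.atTop (nhds 0) := by
      have hrw : ∀ n : ℕ, u0 (z n) = u 0 (z n) :=
        fun n => (hinit (z n) (hzΩ n)).symm
      have h1 := (hconv 0 h0T).sub (tendsto_const_nhds (x := decRearr Ω (u 0) s))
      rw [sub_self] at h1
      have h2 := h1.abs
      rw [abs_zero] at h2
      simp only [hrw]
      exact h2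
    have hbnd : ∀ n : ℕ, dist (Dn n t)
        ((∫ y in Ω, K ((u t y - decRearr Ω (u t) s) / h) * (u t y - decRearr Ω (u t) s))
          + lam * (decRearr Ω (u 0) s - decRearr Ω (u t) s))
        ≤ ((volume Ω).toReal * Lψ + lam) * |u t (z n) - decRearr Ω (u t) s|
          + lam * |u0 (z n) - decRearr Ω (u 0) s| := by
      intro n
      rw [Real.dist_eq]
      have hIdiff : (∫ y in Ω, K ((u t y - u t (z n)) / h) * (u t y - u t (z n)))
          - (∫ y in Ω, K ((u t y - decRearr Ω (u t) s) / h) * (u t y - decRearr Ω (u t) s))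
          = ∫ y in Ω, (K ((u t y - u t (z n)) / h) * (u t y - u t (z n))
            - K ((u t y - decRearr Ω (u t) s) / h) * (u t y - decRearr Ω (u t) s)) :=
        (integral_sub (hInt t ht (u t (z n))) (hInt t ht (decRearr Ω (u t) s))).symm
      have hbd : ∀ᵐ y ∂(volume.restrict Ω),
          ‖K ((u t y - u t (z n)) / h) * (u t y - u t (z n))
            - K ((u t y - decRearr Ω (u t) s) / h) * (u t y - decRearr Ω (u t) s)‖
            ≤ Lψ * |u t (z n) - decRearr Ω (u t) s| := by
        rw [ae_restrict_iff' hΩm]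
        refine Filter.Eventually.of_forall (fun y hy => ?_)
        rw [Real.norm_eq_abs]
        have hcb : |u t y - u t (z n)| ≤ 2*M := by
          calc |u t y - u t (z n)| ≤ |u t y| + |u t (z n)| := abs_sub _ _
          _ ≤ 2*M := by linarith [hubdd t ht y hy, hubdd t ht (z n) (hzΩ n)]
        have hcb' : |u t y - decRearr Ω (u t) s| ≤ 2*M := by
          calc |u t y - decRearr Ω (u t) s| ≤ |u t y| + |decRearr Ω (u t) s| := abs_sub _ _
          _ ≤ 2*M := by linarith [hubdd t ht y hy]
        have := hψ _ _ hcb hcb'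
        have harg : |(u t y - u t (z n)) - (u t y - decRearr Ω (u t) s)|
            = |u t (z n) - decRearr Ω (u t) s| := by
          rw [show (u t y - u t (z n)) - (u t y - decRearr Ω (u t) s)
            = -(u t (z n) - decRearr Ω (u t) s) by ring, abs_neg]
        rw [harg] at this
        exact this
      have hIbound : |(∫ y in Ω, K ((u t y - u t (z n)) / h) * (u t y - u t (z n)))
          - (∫ y in Ω, K ((u t y - decRearr Ω (u t) s) / h) * (u t y - decRearr Ω (u t) s))|
          ≤ (Lψ * |u t (z n) - decRearr Ω (u t) s|) * (volume Ω).toReal := by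
        rw [hIdiff, ← Real.norm_eq_abs]
        have := norm_integral_le_of_norm_le_const hbd
        rwa [measureReal_restrict_apply_univ] at this
      have hlamb : |lam * (u0 (z n) - u t (z n))
          - lam * (decRearr Ω (u 0) s - decRearr Ω (u t) s)|
          ≤ lam * (|u0 (z n) - decRearr Ω (u 0) s| + |u t (z n) - decRearr Ω (u t) s|) := by
        have h1 : lam * (u0 (z n) - u t (z n)) - lam * (decRearr Ω (u 0) s - decRearr Ω (u t) s)
            = lam * ((u0 (z n) - decRearr Ω (u 0) s) - (u t (z n) - decRearr Ω (u t) s)) := by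
          ring
        rw [h1, abs_mul, abs_of_nonneg hlam]
        apply mul_le_mul_of_nonneg_left _ hlam
        exact abs_sub _ _
      have htri : |Dn n t - ((∫ y in Ω, K ((u t y - decRearr Ω (u t) s) / h)
          * (u t y - decRearr Ω (u t) s))
          + lam * (decRearr Ω (u 0) s - decRearr Ω (u t) s))|
          ≤ |(∫ y in Ω, K ((u t y - u t (z n)) / h) * (u t y - u t (z n)))
            - (∫ y in Ω, K ((u t y - decRearr Ω (u t) s) / h) * (u t y - decRearr Ω (u t) s))|
            + |lam * (u0 (z n) - u t (z n))
              - lam * (decRearr Ω (u 0) s - decRearr Ω (u t) s)| := by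
        rw [hDndef]
        simp only
        have := abs_add_le ((∫ y in Ω, K ((u t y - u t (z n)) / h) * (u t y - u t (z n)))
          - (∫ y in Ω, K ((u t y - decRearr Ω (u t) s) / h) * (u t y - decRearr Ω (u t) s)))
          (lam * (u0 (z n) - u t (z n)) - lam * (decRearr Ω (u 0) s - decRearr Ω (u t) s))
        calc _ = |((∫ y in Ω, K ((u t y - u t (z n)) / h) * (u t y - u t (z n)))
            - (∫ y in Ω, K ((u t y - decRearr Ω (u t) s) / h) * (u t y - decRearr Ω (u t) s)))
            + (lam * (u0 (z n) - u t (z n))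
              - lam * (decRearr Ω (u 0) s - decRearr Ω (u t) s))| := by congr 1; ring
        _ ≤ _ := this
      calc |Dn n t - ((∫ y in Ω, K ((u t y - decRearr Ω (u t) s) / h)
            * (u t y - decRearr Ω (u t) s))
            + lam * (decRearr Ω (u 0) s - decRearr Ω (u t) s))| ≤ _ := htri
      _ ≤ (Lψ * |u t (z n) - decRearr Ω (u t) s|) * (volume Ω).toReal
          + lam * (|u0 (z n) - decRearr Ω (u 0) s| + |u t (z n) - decRearr Ω (u t) s|) := by
          linarith
      _ = ((volume Ω).toReal * Lψ + lam) * |u t (z n) - decRearr Ω (u t) s|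
          + lam * |u0 (z n) - decRearr Ω (u 0) s| := by ring
    rw [tendsto_iff_dist_tendsto_zero]
    have hbtend : Filter.Tendsto (fun n =>
        ((volume Ω).toReal * Lψ + lam) * |u t (z n) - decRearr Ω (u t) s|
          + lam * |u0 (z n) - decRearr Ω (u 0) s|) Filter.atTop (nhds 0) := by
      have h1 := he.const_mul ((volume Ω).toReal * Lψ + lam)
      have h2 := hf.const_mul lam
      have := h1.add h2
      simpa using this
    exact squeeze_zero (fun n => dist_nonneg) hbnd hbtend
  -- quadratic error bound for the limit function
  have hquad : ∀ τ ∈ Icc (0:ℝ) T,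
      |decRearr Ω (u τ) s - decRearr Ω (u t) s
        - ((∫ y in Ω, K ((u t y - decRearr Ω (u t) s) / h) * (u t y - decRearr Ω (u t) s))
          + lam * (decRearr Ω (u 0) s - decRearr Ω (u t) s)) * (τ - t)|
        ≤ C₃ * |τ - t| * |τ - t| := by
    intro τ hτ
    have hseq : Filter.Tendsto (fun n => u τ (z n) - u t (z n) - Dn n t * (τ - t))
        Filter.atTop (nhds (decRearr Ω (u τ) s - decRearr Ω (u t) s
          - ((∫ y in Ω, K ((u t y - decRearr Ω (u t) s) / h) * (u t y - decRearr Ω (u t) s))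
            + lam * (decRearr Ω (u 0) s - decRearr Ω (u t) s)) * (τ - t))) :=
      ((hconv τ hτ).sub (hconv t ht)).sub (hDtend.mul_const _)
    have hle : ∀ n : ℕ, |u τ (z n) - u t (z n) - Dn n t * (τ - t)|
        ≤ C₃ * |τ - t| * |τ - t| := by
      intro n
      have := hMVT n τ hτ
      calc |u τ (z n) - u t (z n) - Dn n t * (τ - t)| ≤ (C₃ * |τ - t|) * |τ - t| := this
      _ = C₃ * |τ - t| * |τ - t| := by ring
    exact le_of_tendsto hseq.abs (Filter.Eventually.of_forall hle)
  -- identify the integral over (0, |Ω|) with the integral over Ω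
  have hFcont : Continuous (fun v => K ((v - decRearr Ω (u t) s) / h)
      * (v - decRearr Ω (u t) s)) := by
    have h1 : Continuous (fun v : ℝ => v - decRearr Ω (u t) s) :=
      continuous_id.sub continuous_const
    exact ((hKlip.continuous).comp (h1.div_const h)).mul h1
  have hintval : (∫ σ in (0:ℝ)..(volume Ω).toReal,
      K ((decRearr Ω (u t) σ - decRearr Ω (u t) s) / h)
        * (decRearr Ω (u t) σ - decRearr Ω (u t) s))
      = ∫ y in Ω, K ((u t y - decRearr Ω (u t) s) / h) * (u t y - decRearr Ω (u t) s) := by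
    rw [intervalIntegral.integral_of_le hmpos.le, integral_Ioc_eq_integral_Ioo]
    exact push_integral hΩm (humeas t ht) hfin (hubdd t ht) hFcont
  -- conclude
  rw [hintval, ← hpart1 s, hasDerivWithinAt_iff_isLittleO]
  have hbigO : (fun τ => decRearr Ω (u τ) s - decRearr Ω (u t) s
      - (τ - t) • ((∫ y in Ω, K ((u t y - decRearr Ω (u t) s) / h)
        * (u t y - decRearr Ω (u t) s))
        + lam * (decRearr Ω (u 0) s - decRearr Ω (u t) s)))
      =O[nhdsWithin t (Icc 0 T)] (fun τ => (τ - t) * (τ - t)) := by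
    rw [Asymptotics.isBigO_iff]
    refine ⟨C₃, Filter.eventually_of_mem self_mem_nhdsWithin (fun τ hτ => ?_)⟩
    rw [Real.norm_eq_abs, Real.norm_eq_abs, smul_eq_mul, abs_mul]
    have := hquad τ hτ
    calc |decRearr Ω (u τ) s - decRearr Ω (u t) s
        - (τ - t) * ((∫ y in Ω, K ((u t y - decRearr Ω (u t) s) / h)
          * (u t y - decRearr Ω (u t) s))
          + lam * (decRearr Ω (u 0) s - decRearr Ω (u t) s))|
        = |decRearr Ω (u τ) s - decRearr Ω (u t) s
        - ((∫ y in Ω, K ((u t y - decRearr Ω (u t) s) / h)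
          * (u t y - decRearr Ω (u t) s))
          + lam * (decRearr Ω (u 0) s - decRearr Ω (u t) s)) * (τ - t)| := by
          congr 1; ring
    _ ≤ C₃ * |τ - t| * |τ - t| := this
    _ = C₃ * (|τ - t| * |τ - t|) := by ring
  have hsmall : (fun τ : ℝ => (τ - t) * (τ - t)) =o[nhdsWithin t (Icc 0 T)]
      (fun τ => τ - t) := by
    rw [Asymptotics.isLittleO_iff]
    intro c hc
    have hev : ∀ᶠ τ in nhdsWithin t (Icc 0 T), |τ - t| ≤ c := by
      apply Filter.Eventually.filter_mono nhdsWithin_le_nhds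
      have hball : Metric.ball t c ∈ nhds t := Metric.ball_mem_nhds t hc
      filter_upwards [hball] with τ hτ
      rw [Metric.mem_ball, Real.dist_eq] at hτ
      exact hτ.le
    filter_upwards [hev] with τ hτ'
    rw [Real.norm_eq_abs, Real.norm_eq_abs, abs_mul]
    exact mul_le_mul_of_nonneg_right hτ' (abs_nonneg _)
  exact hbigO.trans_isLittleO hsmall
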